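/- Let ξ₁,...,ξ_d be i.i.d. standard Gaussian, σ > 0, 1 ≤ s < d, a > 0, and let θ ∈ ℝ^d have exactly s nonzero components, each satisfying |θ_j| ≥ a. Define X_j = θ_j + σξ_j, t = a/2 + (σ²/a)·log(d/s - 1), the selector η̂_j = 1{|X_j| ≥ t}, and η_j = 1{θ_j ≠ 0}. Then (1/s)·E[Σ_{j=1}^d |η̂_j - η_j|] ≤ 2Ψ(d,s,a), where Ψ(d,s,a) = (d/s-1)·Φ(-a/(2σ) - (σ/a)·log(d/s-1)) + Φ(-max(a/(2σ) - (σ/a)·log(d/s-1), 0)). -/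

import Mathlib

open MeasureTheory ProbabilityTheory

/-- The standard Gaussian cumulative distribution function. -/
noncomputable def Phi (x : ℝ) : ℝ :=
  (Real.sqrt (2 * Real.pi))⁻¹ * ∫ u in Set.Iic x, Real.exp (-u ^ 2 / 2)

/-- Minimax risk expression for the two-sided sparsity class `Θ_d(s,a)`. -/
noncomputable def Psi (d s : ℕ) (a σ : ℝ) : ℝ :=
  ((d : ℝ) / s - 1) * Phi (-(a / (2 * σ)) - (σ / a) * Real.log ((d : ℝ) / s - 1))
    + Phi (-(max (a / (2 * σ) - (σ / a) * Real.log ((d : ℝ) / s - 1)) 0))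

/-- The law of the observation vector `X = θ + σξ` with i.i.d. standard Gaussian `ξ_j`:
the product of Gaussian measures `N(θ_j, σ²)`. -/
noncomputable def Pmodel (d : ℕ) (σ : ℝ) (θ : Fin d → ℝ) : Measure (Fin d → ℝ) :=
  Measure.pi fun j => gaussianReal (θ j) (Real.toNNReal (σ ^ 2))

section Aux
open Real Set

lemma Phi_nonneg (x : ℝ) : 0 ≤ Phi x :=
  mul_nonneg (inv_nonneg.2 (Real.sqrt_nonneg _))
    (integral_nonneg fun _ => (Real.exp_pos _).le)

lemma gauss_Iic (x : ℝ) : gaussianReal 0 1 (Set.Iic x) = ENNReal.ofReal (Phi x) := by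
  rw [gaussianReal_apply_eq_integral 0 one_ne_zero]
  congr 1
  rw [Phi, ← integral_const_mul]
  refine setIntegral_congr_fun measurableSet_Iic fun u _ => ?_
  simp [gaussianPDFReal]

lemma gauss_neg_map : (gaussianReal 0 1).map (fun y : ℝ => -y) = gaussianReal 0 1 := by
  have h := gaussianReal_map_const_mul (μ := 0) (v := 1) (-1)
  have h2 : (fun y : ℝ => -1 * y) = fun y : ℝ => -y := by ext y; ring
  have h3 : (NNReal.mk ((-1:ℝ)^2) (sq_nonneg _) * 1 : NNReal) = 1 := by rw [mul_one]; exact NNReal.eq (by norm_num)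
  rw [h2, mul_zero] at h
  convert h using 2
  exact h3.symm

lemma gauss_Ici (x : ℝ) : gaussianReal 0 1 (Set.Ici x) = ENNReal.ofReal (Phi (-x)) := by
  have hp : (fun y : ℝ => -y) ⁻¹' Set.Iic (-x) = Set.Ici x := by
    ext y; simp
  calc gaussianReal 0 1 (Set.Ici x)
      = ((gaussianReal 0 1).map (fun y : ℝ => -y)) (Set.Iic (-x)) := by
        rw [Measure.map_apply measurable_neg measurableSet_Iic, hp]
    _ = ENNReal.ofReal (Phi (-x)) := by rw [gauss_neg_map, gauss_Iic]

lemma half_le_Phi_zero : (1:ℝ) ≤ 2 * Phi 0 := by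
  have h1 : (1 : ENNReal) = gaussianReal 0 1 Set.univ := (measure_univ).symm
  have hsplit : (Set.univ : Set ℝ) ⊆ Set.Iic 0 ∪ Set.Ici 0 := by
    intro y _; exact (le_total y 0).imp id id
  have h2 := (measure_mono (μ := gaussianReal 0 1) hsplit).trans (measure_union_le _ _)
  rw [← h1, gauss_Iic, gauss_Ici, neg_zero,
    ← ENNReal.ofReal_add (Phi_nonneg 0) (Phi_nonneg 0)] at h2
  rw [show (1:ENNReal) = ENNReal.ofReal 1 by simp] at h2
  have h3 := (ENNReal.ofReal_le_ofReal_iff (by linarith [Phi_nonneg 0])).1 h2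
  linarith

lemma gauss_map {σ : ℝ} (hσ : 0 < σ) (m : ℝ) :
    gaussianReal m (Real.toNNReal (σ^2)) = (gaussianReal 0 1).map (fun x => σ * x + m) := by
  have h1 : (gaussianReal 0 1).map (fun x : ℝ => σ * x) = gaussianReal 0 (Real.toNNReal (σ^2)) := by
    rw [gaussianReal_map_const_mul]
    congr 1
    · ring
    · ext; simp [Real.coe_toNNReal _ (sq_nonneg σ)]
  have h2 := gaussianReal_map_add_const (μ := 0) (v := Real.toNNReal (σ^2)) m
  rw [← h1, Measure.map_map (measurable_add_const m) (measurable_const_mul σ)] at h2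
  rw [zero_add] at h2
  rw [← h2]
  rfl

lemma key {σ : ℝ} (hσ : 0 < σ) (m : ℝ) {S : Set ℝ} (hS : MeasurableSet S) (c : ℝ)
    (h : ∀ x : ℝ, σ * x + m ∈ S → x ≤ -c ∨ c ≤ x) :
    (gaussianReal m (Real.toNNReal (σ^2)) S).toReal ≤ 2 * Phi (-c) := by
  have hnn : (0:ℝ) ≤ 2 * Phi (-c) := by
    have := Phi_nonneg (-c); linarith
  refine ENNReal.toReal_le_of_le_ofReal hnn ?_
  rw [gauss_map hσ m, Measure.map_apply (by fun_prop) hS]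
  have hsub : (fun x => σ * x + m) ⁻¹' S ⊆ Set.Iic (-c) ∪ Set.Ici c := fun x hx => h x hx
  calc gaussianReal 0 1 ((fun x => σ * x + m) ⁻¹' S)
      ≤ gaussianReal 0 1 (Set.Iic (-c)) + gaussianReal 0 1 (Set.Ici c) :=
        (measure_mono hsub).trans (measure_union_le _ _)
    _ = ENNReal.ofReal (2 * Phi (-c)) := by
        rw [gauss_Iic, gauss_Ici, ← ENNReal.ofReal_add (Phi_nonneg _) (Phi_nonneg _), two_mul]

lemma prob_toReal_le_one {μ : Measure ℝ} [IsProbabilityMeasure μ] (S : Set ℝ) :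
    (μ S).toReal ≤ 1 := by
  refine ENNReal.toReal_le_of_le_ofReal zero_le_one ?_
  simpa using prob_le_one (μ := μ) (s := S)

end Aux

open Real Set in
theorem risk_bound_two_sided (d s : ℕ) (hs : 1 ≤ s) (hsd : s < d) (a σ : ℝ)
    (ha : 0 < a) (hσ : 0 < σ) (θ : Fin d → ℝ)
    (hcard : (Finset.univ.filter fun j => θ j ≠ 0).card = s)
    (hθ : ∀ j, θ j ≠ 0 → a ≤ |θ j|)
    (t : ℝ) (ht : t = a / 2 + σ ^ 2 / a * Real.log ((d : ℝ) / s - 1)) :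
    (1 / (s : ℝ)) * ∫ x, (∑ j, |(if t ≤ |x j| then (1 : ℝ) else 0)
        - (if θ j ≠ 0 then (1 : ℝ) else 0)|) ∂(Pmodel d σ θ)
      ≤ 2 * Psi d s a σ := by
  classical
  haveI : IsProbabilityMeasure (Pmodel d σ θ) :=
    inferInstanceAs (IsProbabilityMeasure
      (Measure.pi fun j => gaussianReal (θ j) (Real.toNNReal (σ ^ 2))))
  set L := Real.log ((d : ℝ) / s - 1) with hL
  set A := Phi (-(a / (2 * σ)) - (σ / a) * L) with hA
  set B := Phi (-(max (a / (2 * σ) - (σ / a) * L) 0)) with hB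
  have hs0 : (0:ℝ) < (s:ℝ) := by exact_mod_cast hs
  have ha0 : a ≠ 0 := ha.ne'
  have hσ0 : σ ≠ 0 := hσ.ne'
  -- the per-coordinate sets
  have hMa : MeasurableSet {y : ℝ | t ≤ |y|} :=
    measurableSet_le measurable_const measurable_abs
  set S : Fin d → Set ℝ := fun j => if θ j ≠ 0 then {y : ℝ | t ≤ |y|}ᶜ else {y : ℝ | t ≤ |y|}
    with hSdef
  have hSm : ∀ j, MeasurableSet (S j) := by
    intro j
    rw [hSdef]
    by_cases hj : θ j ≠ 0
    · simp only [if_pos hj]; exact hMa.compl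
    · simp only [if_neg hj]; exact hMa
  -- rewrite integrand as sum of indicators
  have hfe : ∀ (x : Fin d → ℝ) (j : Fin d),
      |(if t ≤ |x j| then (1 : ℝ) else 0) - (if θ j ≠ 0 then (1 : ℝ) else 0)|
        = (Function.eval j ⁻¹' S j).indicator (fun _ => (1:ℝ)) x := by
    intro x j
    by_cases hj : θ j ≠ 0
    · simp only [hSdef, if_pos hj, Set.indicator_apply, Set.mem_preimage,
        Set.mem_compl_iff, Set.mem_setOf_eq, Function.eval]
      by_cases hx : t ≤ |x j| <;> simp [hx, hj]
    · simp only [hSdef, if_neg hj, Set.indicator_apply, Set.mem_preimage,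
        Set.mem_setOf_eq, Function.eval]
      by_cases hx : t ≤ |x j| <;> simp [hx, hj]
  have hint : ∀ j : Fin d, Integrable ((Function.eval j ⁻¹' S j).indicator
      (fun _ => (1:ℝ))) (Pmodel d σ θ) := by
    intro j
    exact (integrable_const (1:ℝ)).indicator ((hSm j).preimage (measurable_pi_apply j))
  have hcyl : ∀ j : Fin d, Pmodel d σ θ (Function.eval j ⁻¹' S j)
      = gaussianReal (θ j) (Real.toNNReal (σ^2)) (S j) := by
    intro j
    rw [Pmodel, Set.eval_preimage, Measure.pi_pi]
    rw [Finset.prod_eq_single j (fun i _ hij => by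
        rw [Function.update_of_ne hij]; exact measure_univ) (fun h => absurd (Finset.mem_univ j) h)]
    rw [Function.update_self]
  have hIeq : ∫ x, (∑ j, |(if t ≤ |x j| then (1 : ℝ) else 0)
        - (if θ j ≠ 0 then (1 : ℝ) else 0)|) ∂(Pmodel d σ θ)
      = ∑ j : Fin d, (gaussianReal (θ j) (Real.toNNReal (σ^2)) (S j)).toReal := by
    have : ∀ x : Fin d → ℝ, (∑ j, |(if t ≤ |x j| then (1 : ℝ) else 0)
        - (if θ j ≠ 0 then (1 : ℝ) else 0)|)
        = ∑ j, (Function.eval j ⁻¹' S j).indicator (fun _ => (1:ℝ)) x := by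
      intro x; exact Finset.sum_congr rfl fun j _ => hfe x j
    rw [MeasureTheory.integral_congr_ae (Filter.Eventually.of_forall this),
      integral_finset_sum _ (fun j _ => hint j)]
    refine Finset.sum_congr rfl fun j _ => ?_
    rw [← hcyl j]
    exact MeasureTheory.integral_indicator_one ((hSm j).preimage (measurable_pi_apply j))
  have hteq : -(t / σ) = -(a / (2 * σ)) - (σ / a) * L := by
    rw [ht]; field_simp; ring
  have hbound0 : ∀ j, θ j = 0 →
      (gaussianReal (θ j) (Real.toNNReal (σ^2)) (S j)).toReal ≤ 2 * A := by
    intro j hj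
    have hSj : S j = {y : ℝ | t ≤ |y|} := by rw [hSdef]; simp [hj]
    rw [hSj, hj, hA, ← hteq]
    refine key hσ 0 hMa (t / σ) ?_
    intro x hx
    have hx' : t ≤ σ * |x| := by
      have : t ≤ |σ * x| := by simpa using hx
      rwa [abs_mul, abs_of_pos hσ] at this
    have hc : t / σ ≤ |x| := (div_le_iff₀' hσ).mpr hx'
    rcases le_abs.mp hc with h | h
    · exact Or.inr h
    · exact Or.inl (le_neg.mp h)
  have hbound1 : ∀ j, θ j ≠ 0 →
      (gaussianReal (θ j) (Real.toNNReal (σ^2)) (S j)).toReal ≤ 2 * B := by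
    intro j hj
    have hSj : S j = {y : ℝ | t ≤ |y|}ᶜ := by rw [hSdef]; simp [hj]
    by_cases hc : 0 ≤ a / (2 * σ) - (σ / a) * L
    · have hmax : max (a / (2 * σ) - (σ / a) * L) 0 = a / (2 * σ) - (σ / a) * L :=
        max_eq_left hc
      have hcσ : a / (2 * σ) - (σ / a) * L = (a - t) / σ := by
        rw [ht]; field_simp; ring
      rw [hSj, hB, hmax, hcσ]
      refine key hσ (θ j) hMa.compl ((a - t) / σ) ?_
      intro x hx
      have hxt : |σ * x + θ j| < t := not_le.mp hx
      have haj : a ≤ |θ j| := hθ j hj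
      have htri : |θ j| - |σ * x + θ j| ≤ |σ * x| := by
        have := abs_sub_abs_le_abs_sub (θ j) (σ * x + θ j)
        simpa [abs_sub_comm] using this
      have hx' : a - t ≤ σ * |x| := by
        rw [abs_mul, abs_of_pos hσ] at htri
        linarith
      have hcx : (a - t) / σ ≤ |x| := (div_le_iff₀' hσ).mpr hx'
      rcases le_abs.mp hcx with h | h
      · exact Or.inr h
      · exact Or.inl (le_neg.mp h)
    · have hmax : max (a / (2 * σ) - (σ / a) * L) 0 = 0 := max_eq_right (le_of_not_ge hc)
      rw [hB, hmax, neg_zero]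
      exact (prob_toReal_le_one (S j)).trans half_le_Phi_zero
  -- sum the bounds
  have hcard' : (Finset.univ.filter fun j => ¬ θ j ≠ 0).card = d - s := by
    have h1 := Finset.card_filter_add_card_filter_not
      (s := (Finset.univ : Finset (Fin d))) (p := fun j => θ j ≠ 0)
    rw [hcard, Finset.card_univ, Fintype.card_fin] at h1
    omega
  have hsum : ∑ j : Fin d, (gaussianReal (θ j) (Real.toNNReal (σ^2)) (S j)).toReal
      ≤ (s : ℝ) * (2 * B) + ((d : ℝ) - s) * (2 * A) := by
    rw [← Finset.sum_filter_add_sum_filter_not Finset.univ (fun j => θ j ≠ 0)]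
    have h1 : ∑ j ∈ Finset.univ.filter (fun j => θ j ≠ 0),
        (gaussianReal (θ j) (Real.toNNReal (σ^2)) (S j)).toReal ≤ (s : ℝ) * (2 * B) := by
      calc _ ≤ ∑ _j ∈ Finset.univ.filter (fun j => θ j ≠ 0), (2 * B) :=
            Finset.sum_le_sum fun j hjm => hbound1 j (Finset.mem_filter.mp hjm).2
        _ = (s : ℝ) * (2 * B) := by rw [Finset.sum_const, hcard, nsmul_eq_mul]
    have h2 : ∑ j ∈ Finset.univ.filter (fun j => ¬ θ j ≠ 0),
        (gaussianReal (θ j) (Real.toNNReal (σ^2)) (S j)).toReal ≤ ((d : ℝ) - s) * (2 * A) := by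
      calc _ ≤ ∑ _j ∈ Finset.univ.filter (fun j => ¬ θ j ≠ 0), (2 * A) :=
            Finset.sum_le_sum fun j hjm =>
              hbound0 j (not_not.mp (Finset.mem_filter.mp hjm).2)
        _ = ((d : ℝ) - s) * (2 * A) := by
            rw [Finset.sum_const, hcard', nsmul_eq_mul, Nat.cast_sub hsd.le]
    linarith
  have hPsi : Psi d s a σ = ((d : ℝ) / s - 1) * A + B := by rw [Psi, hA, hB, hL]
  rw [hIeq]
  have hfin : (1 / (s : ℝ)) * ((s : ℝ) * (2 * B) + ((d : ℝ) - s) * (2 * A))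
      = 2 * Psi d s a σ := by
    rw [hPsi]; field_simp; ring
  calc (1 / (s : ℝ)) * ∑ j : Fin d, (gaussianReal (θ j) (Real.toNNReal (σ^2)) (S j)).toReal
      ≤ (1 / (s : ℝ)) * ((s : ℝ) * (2 * B) + ((d : ℝ) - s) * (2 * A)) :=
        mul_le_mul_of_nonneg_left hsum (by positivity)
    _ = 2 * Psi d s a σ := hfin
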